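/- Let n ≥ 4 be divisible by 4 and d = n/2. Then the minimum of the circlet cost Σ_{e ∈ H} c_{ℓ(e)} over all Hamiltonian cycles H on the complete graph with vertex set ZMod n equals exactly n − 2. In particular, there exists a Hamiltonian cycle using two edges of length d and n − 2 edges of length 1 whose circlet cost is n − 2. -/

import Mathlib

/-- The length of an edge of the complete graph on `ZMod n`:
`ℓ(i,j) = min(|i−j|, n−|i−j|)`, expressed as `min (i-j).val (j-i).val`. -/
def zLenSym {n : ℕ} : Sym2 (ZMod n) → ℕ :=
  Sym2.lift ⟨fun i j => min (i - j).val (j - i).val, fun i j => min_comm _ _⟩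

/-- The circlet cost of an edge: its length `ℓ` if `ℓ` is odd, and `d − ℓ` if `ℓ` is even. -/
def circCost {n : ℕ} (d : ℕ) (e : Sym2 (ZMod n)) : ℕ :=
  if Odd (zLenSym e) then zLenSym e else d - zLenSym e

namespace CircAux

def rInt (n : ℕ) (s : ZMod n) : ℤ :=
  if s.val % 2 = 1 then (if s.val < n / 2 then (s.val : ℤ) else (s.val : ℤ) - n)
  else (s.val : ℤ) - (n / 2 : ℕ)

variable {n : ℕ}

lemma zLenSym_mk (a b : ZMod n) : zLenSym s(a, b) = min (a - b).val (b - a).val := rfl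

lemma circCost_eq_natAbs (hn : 4 ≤ n) (h4 : 4 ∣ n) {a b : ZMod n} (hab : a ≠ b) :
    circCost (n / 2) s(a, b) = (rInt n (b - a)).natAbs := by
  haveI : NeZero n := ⟨by omega⟩
  set s : ZMod n := b - a with hs
  have hs0 : s ≠ 0 := sub_ne_zero.2 (Ne.symm hab)
  have hsv : 0 < s.val := ZMod.val_pos.2 hs0
  have hvlt : s.val < n := ZMod.val_lt s
  have hneg : (a - b).val = n - s.val := by
    have : a - b = -s := by ring
    rw [this, ZMod.neg_val, if_neg hs0]
  have hlen : zLenSym s(a, b) = min (n - s.val) s.val := by rw [zLenSym_mk, hneg]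
  rw [circCost, hlen]
  have hofs : Odd (min (n - s.val) s.val) ↔ s.val % 2 = 1 := by
    rcases min_choice (n - s.val) s.val with h | h <;> rw [h, Nat.odd_iff] <;> omega
  simp only [rInt]
  rcases Nat.even_or_odd s.val with he | ho
  · have h2 : s.val % 2 = 0 := Nat.even_iff.1 he
    rw [if_neg (by simp [hofs, h2]), if_neg (by omega)]
    omega
  · have h2 : s.val % 2 = 1 := Nat.odd_iff.1 ho
    rw [if_pos (hofs.2 h2), if_pos h2]
    by_cases hlt : s.val < n / 2
    · rw [if_pos hlt]; omega
    · rw [if_neg hlt]; omega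

lemma natAbs_sum_le (l : List ℤ) : l.sum.natAbs ≤ (l.map Int.natAbs).sum := by
  induction l with
  | nil => simp
  | cons a l ih =>
    simp only [List.sum_cons, List.map_cons]
    calc (a + l.sum).natAbs ≤ a.natAbs + l.sum.natAbs := Int.natAbs_add_le _ _
    _ ≤ a.natAbs + (l.map Int.natAbs).sum := by omega

lemma rInt_cast_d (h2 : 2 ∣ n) (s : ZMod n) :
    ((rInt n s : ℤ) : ZMod (n / 2)) = (s.val : ZMod (n / 2)) := by
  have hnc : ((n : ℕ) : ZMod (n / 2)) = 0 := by
    rw [ZMod.natCast_eq_zero_iff]; exact ⟨2, by omega⟩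
  have hdc : ((n / 2 : ℕ) : ZMod (n / 2)) = 0 := by
    rw [ZMod.natCast_eq_zero_iff]
  unfold rInt
  split_ifs with h1 h2'
  · rw [Int.cast_natCast]
  · rw [Int.cast_sub, Int.cast_natCast, Int.cast_natCast, hnc, sub_zero]
  · rw [Int.cast_sub, Int.cast_natCast, Int.cast_natCast, hdc, sub_zero]

lemma rInt_cast_n [NeZero n] (h2 : 2 ∣ n) (s : ZMod n) :
    ((rInt n s : ℤ) : ZMod n) + ((n / 2 : ℕ) : ZMod n) * (s.val % 2 : ℕ) =
      s + ((n / 2 : ℕ) : ZMod n) := by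
  have hval : ((s.val : ℕ) : ZMod n) = s := by
    rw [ZMod.natCast_val, ZMod.cast_id]
  have hnn : ((n : ℕ) : ZMod n) = 0 := ZMod.natCast_self n
  have hdd : ((n / 2 : ℕ) : ZMod n) + ((n / 2 : ℕ) : ZMod n) = 0 := by
    rw [← Nat.cast_add, show n / 2 + n / 2 = n by omega, hnn]
  unfold rInt
  rcases Nat.even_or_odd s.val with he | ho
  · have h0 : s.val % 2 = 0 := Nat.even_iff.1 he
    rw [if_neg (by omega), h0]
    simp only [Int.cast_sub, Int.cast_natCast, hval, Nat.cast_zero, mul_zero]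
    linear_combination -hdd
  · have h1 : s.val % 2 = 1 := Nat.odd_iff.1 ho
    rw [if_pos h1, h1]
    split_ifs <;>
      simp only [Int.cast_sub, Int.cast_natCast, hval, hnn, Nat.cast_one, mul_one, sub_zero]

def gstep (n : ℕ) (e : (⊤ : SimpleGraph (ZMod n)).Dart) : ℤ := rInt n (e.snd - e.fst)
def jstep (n : ℕ) (e : (⊤ : SimpleGraph (ZMod n)).Dart) : ℕ := (e.snd - e.fst).val % 2

lemma valCast_sub [NeZero n] {m : ℕ} (hm : m ∣ n) (x y : ZMod n) :
    (((x - y).val : ℕ) : ZMod m) = (x.val : ZMod m) - (y.val : ZMod m) := by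
  haveI : CharP (ZMod m) m := ZMod.charP m
  rw [ZMod.natCast_val, ZMod.natCast_val, ZMod.natCast_val,
    ← ZMod.castHom_apply (h := hm) (R := ZMod m) (x - y),
    ← ZMod.castHom_apply (h := hm) (R := ZMod m) x,
    ← ZMod.castHom_apply (h := hm) (R := ZMod m) y, map_sub]

section walks
open SimpleGraph Walk

variable [NeZero n]

lemma W1 (h2 : 2 ∣ n)
    {u v : ZMod n} (w : (⊤ : SimpleGraph (ZMod n)).Walk u v) :
    (((w.darts.map (gstep n)).sum : ℤ) : ZMod (n / 2)) =
      (v.val : ZMod (n / 2)) - (u.val : ZMod (n / 2)) := by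
  induction w with
  | nil => simp
  | cons h p ih =>
    rw [Walk.darts_cons, List.map_cons, List.sum_cons, Int.cast_add, ih]
    show ((rInt n _ : ℤ) : ZMod (n/2)) + _ = _
    rw [rInt_cast_d h2, valCast_sub ⟨2, by omega⟩]
    ring

lemma W3 (h2 : 2 ∣ n) {u v : ZMod n} (w : (⊤ : SimpleGraph (ZMod n)).Walk u v) :
    (((w.darts.map (jstep n)).sum : ℕ) : ZMod 2) =
      (v.val : ZMod 2) - (u.val : ZMod 2) := by
  induction w with
  | nil => simp
  | cons h p ih =>
    rw [Walk.darts_cons, List.map_cons, List.sum_cons, Nat.cast_add, ih]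
    show (((_ : ZMod n).val % 2 : ℕ) : ZMod 2) + _ = _
    rw [ZMod.natCast_mod, valCast_sub h2]
    ring

lemma W2 (h2 : 2 ∣ n)
    {u v : ZMod n} (w : (⊤ : SimpleGraph (ZMod n)).Walk u v) :
    (((w.darts.map (gstep n)).sum : ℤ) : ZMod n)
      + ((n / 2 : ℕ) : ZMod n) * ((w.darts.map (jstep n)).sum : ℕ) =
      (v - u) + ((n / 2 : ℕ) : ZMod n) * (w.length : ℕ) := by
  induction w with
  | nil => simp
  | @cons a b c h p ih =>
    rw [Walk.darts_cons, List.map_cons, List.sum_cons, Int.cast_add,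
      List.map_cons, List.sum_cons, Nat.cast_add, Walk.length_cons, Nat.cast_add]
    simp only [gstep, jstep]
    linear_combination ih + rInt_cast_n h2 (b - a)

end walks

open SimpleGraph Walk in
lemma lower_bound (n : ℕ) (hn : 4 ≤ n) (h4 : 4 ∣ n) (v : ZMod n)
    (w : (⊤ : SimpleGraph (ZMod n)).Walk v v) (hw : w.IsHamiltonianCycle) :
    n - 2 ≤ ∑ e ∈ w.edges.toFinset, circCost (n / 2) e := by
  haveI : NeZero n := ⟨by omega⟩
  haveI : NeZero (n / 2) := ⟨by omega⟩
  have h2 : 2 ∣ n := by omega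
  have hnodup : w.edges.Nodup := hw.isCycle.edges_nodup
  rw [List.sum_toFinset _ hnodup]
  have hmap : w.edges.map (circCost (n / 2)) = (w.darts.map (gstep n)).map Int.natAbs := by
    rw [Walk.edges, List.map_map, List.map_map]
    refine List.map_congr_left fun e _ => ?_
    have hne : e.fst ≠ e.snd := e.adj
    show circCost (n / 2) (Sym2.mk e.fst e.snd) = _
    have : Sym2.mk e.fst e.snd = s(e.fst, e.snd) := rfl
    rw [this, circCost_eq_natAbs hn h4 hne]
    rfl
  rw [hmap]
  set L := w.darts.map (gstep n) with hL
  -- divisibility of the total sum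
  have hlen : w.length = n := by rw [hw.length_eq, ZMod.card]
  have hJ2 : 2 ∣ (w.darts.map (jstep n)).sum := by
    have h3 := W3 (n := n) h2 w
    rw [sub_self] at h3
    exact (ZMod.natCast_eq_zero_iff _ 2).1 h3
  have hSdvd : (n : ℤ) ∣ L.sum := by
    rw [← ZMod.intCast_zmod_eq_zero_iff_dvd]
    have h2' := W2 (n := n) h2 w
    rw [sub_self, hlen, ZMod.natCast_self, mul_zero, add_zero] at h2'
    have hz : (((n / 2) * (w.darts.map (jstep n)).sum : ℕ) : ZMod n) = 0 := by
      rw [ZMod.natCast_eq_zero_iff]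
      obtain ⟨j, hj⟩ := hJ2
      exact ⟨j, by rw [hj, show n / 2 * (2 * j) = n / 2 * 2 * j from by ring,
        Nat.div_mul_cancel h2]⟩
    have : ((L.sum : ℤ) : ZMod n) =
        - (((n / 2) * (w.darts.map (jstep n)).sum : ℕ) : ZMod n) := by
      push_cast
      push_cast at h2'
      linear_combination h2'
    rw [this, hz, neg_zero]
  rcases eq_or_ne L.sum 0 with hS0 | hSne
  · -- zero winding case
    have hmem : ∀ x : ZMod n, x ∈ w.support := hw.mem_support
    set T : ZMod n → ℤ := fun x => ((w.takeUntil x (hmem x)).darts.map (gstep n)).sum with hT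
    have hpre : ∀ x : ZMod n, ((w.takeUntil x (hmem x)).darts.map (gstep n)) <+: L := by
      intro x
      refine ⟨(w.dropUntil x (hmem x)).darts.map (gstep n), ?_⟩
      rw [hL, ← List.map_append, ← Walk.darts_append, Walk.take_spec]
    have hTcast : ∀ x : ZMod n,
        ((T x : ℤ) : ZMod (n / 2)) = (x.val : ZMod (n / 2)) - (v.val : ZMod (n / 2)) :=
      fun x => W1 h2 _
    set A : Finset ℤ := Finset.image T Finset.univ with hA
    have hAne : A.Nonempty := ⟨T v, Finset.mem_image_of_mem _ (Finset.mem_univ v)⟩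
    have hcard : n / 2 ≤ A.card := by
      have hsurj : Function.Surjective
          (fun x : ZMod n => (x.val : ZMod (n / 2)) - (v.val : ZMod (n / 2))) := by
        intro t
        refine ⟨(((t + (v.val : ZMod (n / 2))).val : ℕ) : ZMod n), ?_⟩
        simp only
        rw [ZMod.val_cast_of_lt (lt_of_lt_of_le (ZMod.val_lt _) (by omega)),
          ZMod.natCast_val, ZMod.cast_id]
        ring
      have himg : Finset.image
          (fun x : ZMod n => (x.val : ZMod (n / 2)) - (v.val : ZMod (n / 2)))
          Finset.univ = Finset.univ := Finset.image_univ_of_surjective hsurj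
      have himg2 : Finset.image (fun z : ℤ => (z : ZMod (n / 2))) A = Finset.univ := by
        rw [hA, Finset.image_image, ← himg]
        exact Finset.image_congr fun x _ => hTcast x
      calc n / 2 = (Finset.univ : Finset (ZMod (n / 2))).card := by
            rw [Finset.card_univ, ZMod.card]
      _ = (Finset.image (fun z : ℤ => (z : ZMod (n / 2))) A).card := by rw [himg2]
      _ ≤ A.card := Finset.card_image_le
    have hba : A.min' hAne ≤ A.max' hAne := Finset.min'_le _ _ (Finset.max'_mem _ _)
    have hgap : (n / 2 : ℤ) - 1 ≤ A.max' hAne - A.min' hAne := by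
      have hsub : A ⊆ Finset.Icc (A.min' hAne) (A.max' hAne) := fun z hz =>
        Finset.mem_Icc.2 ⟨Finset.min'_le _ _ hz, Finset.le_max' _ _ hz⟩
      have hcc := Finset.card_le_card hsub
      rw [Int.card_Icc] at hcc
      omega
    obtain ⟨xa, -, hxa⟩ := Finset.mem_image.1 (Finset.max'_mem A hAne)
    obtain ⟨xb, -, hxb⟩ := Finset.mem_image.1 (Finset.min'_mem A hAne)
    have key : ∀ P Q : List ℤ, P <+: Q → Q <+: L →
        P.sum.natAbs + (Q.sum - P.sum).natAbs + (L.sum - Q.sum).natAbs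
          ≤ (L.map Int.natAbs).sum := by
      rintro P Q ⟨M, rfl⟩ ⟨R, hR⟩
      rw [← hR]
      simp only [List.map_append, List.sum_append]
      have n1 := natAbs_sum_le P
      have n2 := natAbs_sum_le M
      have n3 := natAbs_sum_le R
      have e1 : (P.sum + M.sum - P.sum) = M.sum := by ring
      have e2 : (P.sum + M.sum + R.sum - (P.sum + M.sum)) = R.sum := by ring
      rw [e1, e2]
      omega
    have hPa := hpre xa
    have hPb := hpre xb
    have hsa : ((w.takeUntil xa (hmem xa)).darts.map (gstep n)).sum = A.max' hAne := hxa
    have hsb : ((w.takeUntil xb (hmem xb)).darts.map (gstep n)).sum = A.min' hAne := hxb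
    rcases List.prefix_or_prefix_of_prefix hPa hPb with hab | hab
    · have hk := key _ _ hab hPb
      rw [hsa, hsb, hS0] at hk
      omega
    · have hk := key _ _ hab hPa
      rw [hsa, hsb, hS0] at hk
      omega
  · have h1 : n ≤ L.sum.natAbs := by
      refine Nat.le_of_dvd (Int.natAbs_pos.2 hSne) ?_
      have := Int.natAbs_dvd_natAbs.2 hSdvd
      simpa using this
    have h2' := natAbs_sum_le L
    omega

def gNat (n j : ℕ) : ℕ := if j < n / 2 then j else (if j < n then n + n / 2 - 1 - j else 0)

def FZ (n j : ℕ) : ZMod n := ((gNat n j : ℕ) : ZMod n)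

def pw {n : ℕ} (F : ℕ → ZMod n) : (m : ℕ) → (∀ i, i < m → F i ≠ F (i + 1)) →
    (⊤ : SimpleGraph (ZMod n)).Walk (F 0) (F m)
  | 0, _ => SimpleGraph.Walk.nil
  | m + 1, h => (pw F m fun i hi => h i (by omega)).concat
      (by rw [SimpleGraph.top_adj]; exact h m (by omega))

lemma pw_edges {n : ℕ} (F : ℕ → ZMod n) (m : ℕ) (h : ∀ i, i < m → F i ≠ F (i + 1)) :
    (pw F m h).edges = (List.range m).map (fun j => s(F j, F (j + 1))) := by
  induction m with
  | zero => rfl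
  | succ m ih =>
    show ((pw F m _).concat _).edges = _
    rw [SimpleGraph.Walk.edges_concat, ih, List.range_succ, List.map_append,
      List.concat_eq_append]
    rfl

lemma pw_support {n : ℕ} (F : ℕ → ZMod n) (m : ℕ) (h : ∀ i, i < m → F i ≠ F (i + 1)) :
    (pw F m h).support = (List.range (m + 1)).map F := by
  induction m with
  | zero => rfl
  | succ m ih =>
    show ((pw F m _).concat _).support = _
    rw [SimpleGraph.Walk.support_concat, ih, List.range_succ (n := m + 1), List.map_append]
    rfl


open SimpleGraph Walk in
lemma construction (n : ℕ) (hn : 4 ≤ n) (h4 : 4 ∣ n) :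
    ∃ (v : ZMod n) (w : (⊤ : SimpleGraph (ZMod n)).Walk v v),
      w.IsHamiltonianCycle ∧
      (w.edges.toFinset.filter (fun e => zLenSym e = n / 2)).card = 2 ∧
      (w.edges.toFinset.filter (fun e => zLenSym e = 1)).card = n - 2 ∧
      ∑ e ∈ w.edges.toFinset, circCost (n / 2) e = n - 2 := by
  haveI : NeZero n := ⟨by omega⟩
  have hgval : ∀ j, gNat n j < n := by intro j; unfold gNat; split_ifs <;> omega
  have hFval : ∀ j, (FZ n j).val = gNat n j := fun j => ZMod.val_cast_of_lt (hgval j)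
  have hFeq : ∀ i j, FZ n i = FZ n j ↔ gNat n i = gNat n j := by
    intro i j
    constructor
    · intro h; rw [← hFval i, ← hFval j, h]
    · intro h; unfold FZ; rw [h]
  have hginj : ∀ a b, a ≤ n → b ≤ n → gNat n a = gNat n b →
      (a = b ∨ (a = 0 ∧ b = n) ∨ (a = n ∧ b = 0)) := by
    intro a b ha hb h; unfold gNat at h; split_ifs at h <;> omega
  have hne : ∀ i, i < n → FZ n i ≠ FZ n (i + 1) := by
    intro i hi heq
    have h := hFeq i (i + 1) |>.1 heq
    rcases hginj i (i + 1) (by omega) (by omega) h with h' | h' | h' <;> omega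
  have hF0 : FZ n 0 = 0 := by
    unfold FZ; rw [show gNat n 0 = 0 from by unfold gNat; split_ifs <;> omega]; simp
  have hlast : FZ n (n - 1 + 1) = 0 := by
    rw [show n - 1 + 1 = n from by omega]
    unfold FZ; rw [show gNat n n = 0 from by unfold gNat; split_ifs <;> omega]; simp
  set F' : ℕ → ZMod n := fun j => FZ n (j + 1) with hF'
  have hq : ∀ i, i < n - 1 → F' i ≠ F' (i + 1) := fun i hi => hne (i + 1) (by omega)
  set q : (⊤ : SimpleGraph (ZMod n)).Walk (F' 0) (F' (n - 1)) := pw F' (n - 1) hq with hqdef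
  set q' : (⊤ : SimpleGraph (ZMod n)).Walk (FZ n 1) 0 := q.copy rfl hlast with hq'def
  have hadj0 : (⊤ : SimpleGraph (ZMod n)).Adj 0 (FZ n 1) := by
    rw [SimpleGraph.top_adj, ← hF0]; exact hne 0 (by omega)
  set W : (⊤ : SimpleGraph (ZMod n)).Walk 0 0 := Walk.cons hadj0 q' with hWdef
  -- supports and edges
  have hqsupp : q.support = (List.range n).map F' := by
    rw [hqdef, pw_support, show n - 1 + 1 = n from by omega]
  have hqedges : q.edges = (List.range (n - 1)).map (fun j => s(F' j, F' (j + 1))) := by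
    rw [hqdef, pw_edges]
  have hWedges : W.edges = (List.range n).map (fun j => s(FZ n j, FZ n (j + 1))) := by
    have hr : List.range n = 0 :: (List.range (n - 1)).map Nat.succ := by
      conv_lhs => rw [show n = (n - 1) + 1 from by omega]
      exact List.range_succ_eq_map (n := n - 1)
    rw [hWdef, Walk.edges_cons, Walk.edges_copy, hqedges, hr, List.map_cons,
      List.map_map, hF0]
    rfl
  have hWtail : W.support.tail = q.support := by
    rw [hWdef, Walk.support_cons, List.tail_cons, hq'def, Walk.support_copy]
  -- support nodup
  have hsuppnodup : q.support.Nodup := by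
    rw [hqsupp]
    refine List.Nodup.map_on ?_ List.nodup_range
    intro i hi j hj hij
    rw [List.mem_range] at hi hj
    have h := hFeq (i + 1) (j + 1) |>.1 hij
    rcases hginj (i + 1) (j + 1) (by omega) (by omega) h with h' | h' | h' <;> omega
  -- each vertex in q.support
  have hmem : ∀ a : ZMod n, a ∈ q.support := by
    intro a
    rw [hqsupp, List.mem_map]
    set t := a.val with ht
    have htlt : t < n := ZMod.val_lt a
    set u : ℕ := if t = 0 then n else (if t < n / 2 then t else n + n / 2 - 1 - t) with hu
    have hu1 : 1 ≤ u ∧ u ≤ n := by rw [hu]; split_ifs <;> omega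
    have hgu : gNat n u = t := by unfold gNat; rw [hu]; split_ifs <;> omega
    refine ⟨u - 1, List.mem_range.2 (by omega), ?_⟩
    show FZ n (u - 1 + 1) = a
    rw [show u - 1 + 1 = u from by omega]
    have : (FZ n u).val = a.val := by rw [hFval, hgu]
    exact ZMod.val_injective n this
  -- cyclicity
  have hpath : q'.IsPath := by
    rw [hq'def, Walk.isPath_copy]
    exact Walk.IsPath.mk' hsuppnodup
  have hnotmem : s((0 : ZMod n), FZ n 1) ∉ q'.edges := by
    rw [hq'def, Walk.edges_copy, hqedges]
    intro hmem'
    rw [List.mem_map] at hmem'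
    obtain ⟨j, hj, hje⟩ := hmem'
    rw [List.mem_range] at hj
    rw [← hF0] at hje
    rw [Sym2.eq_iff] at hje
    rcases hje with ⟨h1, h2⟩ | ⟨h1, h2⟩
    · have := hFeq _ _ |>.1 h1
      rcases hginj (j + 1) 0 (by omega) (by omega) this with h' | h' | h' <;> omega
    · have e1 := hFeq _ _ |>.1 h1
      have e2 := hFeq _ _ |>.1 h2
      have c1 := hginj (j + 1) 1 (by omega) (by omega) e1
      have c2 := hginj (j + 2) 0 (by omega) (by omega) e2
      omega
  have hcyc : W.IsHamiltonianCycle := by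
    rw [Walk.isHamiltonianCycle_iff_isCycle_and_support_count_tail_eq_one]
    constructor
    · exact (Walk.cons_isCycle_iff q' hadj0).2 ⟨hpath, hnotmem⟩
    · intro a
      rw [hWtail]
      exact List.count_eq_one_of_mem hsuppnodup (hmem a)
  -- edge length computation
  have hvcast : ∀ c : ℕ, c < n → ((c : ZMod n)).val = c := fun c hc => ZMod.val_cast_of_lt hc
  have hvneg : ∀ c : ℕ, 0 < c → c < n → ((-(c : ZMod n)).val) = n - c := by
    intro c h0 hcn
    have hc0 : ((c : ZMod n)) ≠ 0 := by
      intro h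
      rw [ZMod.natCast_eq_zero_iff] at h
      exact absurd (Nat.le_of_dvd h0 h) (by omega)
    rw [ZMod.neg_val, if_neg hc0, hvcast c hcn]
  have hsub : ∀ x y : ℕ, y ≤ x → ((x : ZMod n) - (y : ZMod n)) = ((x - y : ℕ) : ZMod n) :=
    fun x y h => by rw [Nat.cast_sub h]
  have hzl : ∀ a b : ZMod n, zLenSym s(a, b) = min (a - b).val (b - a).val := fun a b => rfl
  have hgg : ∀ j, j ≤ n → gNat n j =
      if j < n / 2 then j else (if j < n then n + n / 2 - 1 - j else 0) := fun j _ => rfl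
  have hzlen : ∀ j, j < n → zLenSym s(FZ n j, FZ n (j + 1)) =
      if j = n / 2 - 1 ∨ j = n - 1 then n / 2 else 1 := by
    intro j hj
    have hcases : (j < n / 2 - 1) ∨ (j = n / 2 - 1) ∨ (n / 2 ≤ j ∧ j < n - 1) ∨ (j = n - 1) := by
      omega
    unfold FZ
    rcases hcases with hb | hb | hb | hb
    · have gj : gNat n j = j := by unfold gNat; split_ifs <;> omega
      have gj1 : gNat n (j + 1) = j + 1 := by unfold gNat; split_ifs <;> omega
      rw [gj, gj1, hzl]
      have dBA : ((j + 1 : ℕ) : ZMod n) - ((j : ℕ) : ZMod n) = ((1 : ℕ) : ZMod n) := by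
        rw [hsub (j + 1) j (by omega), show j + 1 - j = 1 from by omega]
      have dAB : ((j : ℕ) : ZMod n) - ((j + 1 : ℕ) : ZMod n) = -((1 : ℕ) : ZMod n) := by
        rw [← dBA, neg_sub]
      rw [dAB, dBA, hvneg 1 (by omega) (by omega), hvcast 1 (by omega), if_neg (by omega)]
      omega
    · have gj : gNat n j = j := by unfold gNat; split_ifs <;> omega
      have gj1 : gNat n (j + 1) = n - 1 := by unfold gNat; split_ifs <;> omega
      rw [gj, gj1, hzl]
      have dBA : ((n - 1 : ℕ) : ZMod n) - ((j : ℕ) : ZMod n) = ((n / 2 : ℕ) : ZMod n) := by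
        rw [hsub (n - 1) j (by omega), show n - 1 - j = n / 2 from by omega]
      have dAB : ((j : ℕ) : ZMod n) - ((n - 1 : ℕ) : ZMod n) = -((n / 2 : ℕ) : ZMod n) := by
        rw [← dBA, neg_sub]
      rw [dAB, dBA, hvneg (n / 2) (by omega) (by omega), hvcast (n / 2) (by omega),
        if_pos (by omega)]
      omega
    · have gj : gNat n j = n + n / 2 - 1 - j := by unfold gNat; split_ifs <;> omega
      have gj1 : gNat n (j + 1) = n + n / 2 - 2 - j := by unfold gNat; split_ifs <;> omega
      rw [gj, gj1, hzl]
      have dAB : ((n + n / 2 - 1 - j : ℕ) : ZMod n) - ((n + n / 2 - 2 - j : ℕ) : ZMod n)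
          = ((1 : ℕ) : ZMod n) := by
        rw [hsub _ _ (by omega), show n + n / 2 - 1 - j - (n + n / 2 - 2 - j) = 1 from by omega]
      have dBA : ((n + n / 2 - 2 - j : ℕ) : ZMod n) - ((n + n / 2 - 1 - j : ℕ) : ZMod n)
          = -((1 : ℕ) : ZMod n) := by
        rw [← dAB, neg_sub]
      rw [dAB, dBA, hvneg 1 (by omega) (by omega), hvcast 1 (by omega), if_neg (by omega)]
      omega
    · have gj : gNat n j = n / 2 := by unfold gNat; split_ifs <;> omega
      have gj1 : gNat n (j + 1) = 0 := by unfold gNat; split_ifs <;> omega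
      rw [gj, gj1, hzl]
      have dAB : ((n / 2 : ℕ) : ZMod n) - ((0 : ℕ) : ZMod n) = ((n / 2 : ℕ) : ZMod n) := by
        rw [Nat.cast_zero, sub_zero]
      have dBA : ((0 : ℕ) : ZMod n) - ((n / 2 : ℕ) : ZMod n) = -((n / 2 : ℕ) : ZMod n) := by
        rw [Nat.cast_zero, zero_sub]
      rw [dAB, dBA, hvneg (n / 2) (by omega) (by omega), hvcast (n / 2) (by omega),
        if_pos (by omega)]
      omega
  -- counting
  set eF : ℕ → Sym2 (ZMod n) := fun j => s(FZ n j, FZ n (j + 1)) with heF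
  have hEnodup : W.edges.Nodup := hcyc.isCycle.edges_nodup
  have hEfin : W.edges.toFinset = (Finset.range n).image eF := by
    rw [hWedges]
    ext e
    simp only [List.mem_toFinset, List.mem_map, List.mem_range, Finset.mem_image,
      Finset.mem_range]
  have hinj : ∀ x ∈ Finset.range n, ∀ y ∈ Finset.range n, eF x = eF y → x = y := by
    have h : (List.map eF (List.range n)).Nodup := by rw [← hWedges]; exact hEnodup
    have h2 := List.inj_on_of_nodup_map h
    intro x hx y hy hxy
    exact h2 (List.mem_range.2 (Finset.mem_range.1 hx))
      (List.mem_range.2 (Finset.mem_range.1 hy)) hxy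
  have hfcongr1 : (Finset.range n).filter (fun j => zLenSym (eF j) = n / 2)
      = (Finset.range n).filter (fun j => j = n / 2 - 1 ∨ j = n - 1) := by
    refine Finset.filter_congr fun j hj => ?_
    rw [Finset.mem_range] at hj
    rw [heF]
    simp only
    rw [hzlen j hj]
    split_ifs with h <;> simp [h] <;> omega
  have hfcongr2 : (Finset.range n).filter (fun j => zLenSym (eF j) = 1)
      = (Finset.range n).filter (fun j => ¬(j = n / 2 - 1 ∨ j = n - 1)) := by
    refine Finset.filter_congr fun j hj => ?_
    rw [Finset.mem_range] at hj
    rw [heF]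
    simp only
    rw [hzlen j hj]
    split_ifs with h <;> simp [h] <;> omega
  have hsetcard : ((Finset.range n).filter (fun j => j = n / 2 - 1 ∨ j = n - 1)).card = 2 := by
    have : (Finset.range n).filter (fun j => j = n / 2 - 1 ∨ j = n - 1)
        = {n / 2 - 1, n - 1} := by
      ext k
      simp only [Finset.mem_filter, Finset.mem_range, Finset.mem_insert, Finset.mem_singleton]
      omega
    rw [this, Finset.card_insert_of_notMem (by simp; omega), Finset.card_singleton]
  have hsetcard2 : ((Finset.range n).filter (fun j => ¬(j = n / 2 - 1 ∨ j = n - 1))).card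
      = n - 2 := by
    have hh := Finset.card_filter_add_card_filter_not
      (s := Finset.range n) (p := fun j => j = n / 2 - 1 ∨ j = n - 1)
    rw [hsetcard, Finset.card_range] at hh
    omega
  have hinj2 : ∀ (p : ℕ → Prop) (hp : DecidablePred p), ∀ x ∈ (Finset.range n).filter p,
      ∀ y ∈ (Finset.range n).filter p, eF x = eF y → x = y := fun p hp x hx y hy hxy =>
    hinj x (Finset.mem_filter.1 hx).1 y (Finset.mem_filter.1 hy).1 hxy
  refine ⟨0, W, hcyc, ?_, ?_, ?_⟩
  · rw [hEfin, Finset.filter_image, Finset.card_image_of_injOn (hinj2 _ _), hfcongr1, hsetcard]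
  · rw [hEfin, Finset.filter_image, Finset.card_image_of_injOn (hinj2 _ _), hfcongr2, hsetcard2]
  · have hde : ¬ Odd (n / 2) := by
      rw [Nat.odd_iff]
      omega
    have hsum0 : ∑ e ∈ W.edges.toFinset, circCost (n / 2) e
        = ∑ j ∈ Finset.range n, circCost (n / 2) (eF j) := by
      rw [hEfin, Finset.sum_image hinj]
    rw [hsum0]
    have hsum1 : ∀ j ∈ Finset.range n, circCost (n / 2) (eF j)
        = if j = n / 2 - 1 ∨ j = n - 1 then 0 else 1 := by
      intro j hj
      rw [Finset.mem_range] at hj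
      rw [heF]
      simp only
      rw [circCost, hzlen j hj]
      by_cases hc : (j = n / 2 - 1 ∨ j = n - 1)
      · simp only [if_pos hc]
        rw [if_neg hde, Nat.sub_self]
      · simp only [if_neg hc]
        rw [if_pos odd_one]
    rw [Finset.sum_congr rfl hsum1, Finset.sum_ite, Finset.sum_const, Finset.sum_const,
      smul_eq_mul, smul_eq_mul, mul_zero, mul_one, zero_add, hsetcard2]

end CircAux

/-- The minimum circlet cost over Hamiltonian cycles on `ZMod n` (with `n ≥ 4`, `4 ∣ n`,
`d = n/2`) equals `n − 2`: every Hamiltonian cycle costs at least `n − 2`, and there is a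
Hamiltonian cycle using two edges of length `d` and `n − 2` edges of length `1` of circlet
cost exactly `n − 2`. -/
theorem circlet_min_value (n : ℕ) (hn : 4 ≤ n) (h4 : 4 ∣ n) :
    (∀ (v : ZMod n) (w : (⊤ : SimpleGraph (ZMod n)).Walk v v),
      w.IsHamiltonianCycle →
        n - 2 ≤ ∑ e ∈ w.edges.toFinset, circCost (n / 2) e) ∧
    (∃ (v : ZMod n) (w : (⊤ : SimpleGraph (ZMod n)).Walk v v),
      w.IsHamiltonianCycle ∧
      (w.edges.toFinset.filter (fun e => zLenSym e = n / 2)).card = 2 ∧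
      (w.edges.toFinset.filter (fun e => zLenSym e = 1)).card = n - 2 ∧
      ∑ e ∈ w.edges.toFinset, circCost (n / 2) e = n - 2) := by
  exact ⟨fun v w hw => CircAux.lower_bound n hn h4 v w hw, CircAux.construction n hn h4⟩
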